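/- Let G be a finite geodetic graph that is locally connected, i.e. for every vertex v of G the subgraph induced by the open neighborhood of v is nonempty and connected. Then G is a complete graph. -/

import Mathlib

open SimpleGraph

/-- A graph is *geodetic* if it is connected and between any two vertices
there is exactly one shortest path (geodesic). -/
def IsGeodetic {V : Type*} (G : SimpleGraph V) : Prop :=
  G.Connected ∧ ∀ u v : V, ∃! p : G.Walk u v, p.IsPath ∧ p.length = G.dist u v

/-- In a geodetic graph, two vertices at distance 2 have a unique common neighbor. -/
lemma unique_common {V : Type*} (G : SimpleGraph V) (hG : IsGeodetic G)
    {x y a b : V} (hxy : G.dist x y = 2)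
    (hxa : G.Adj x a) (hay : G.Adj a y) (hxb : G.Adj x b) (hby : G.Adj b y) : a = b := by
  have hxy' : x ≠ y := by
    intro h; subst h; simp [SimpleGraph.dist_self] at hxy
  have key : ∀ c : V, G.Adj x c → G.Adj c y →
      ((Walk.cons hxa (Walk.cons hay Walk.nil) : G.Walk x y).support =
        [x, c, y]) → a = c := by
    intro c _ _ h
    simpa using h
  -- use uniqueness
  obtain ⟨p, hp, hup⟩ := hG.2 x y
  have prop : ∀ c : V, (hc1 : G.Adj x c) → (hc2 : G.Adj c y) →
      (Walk.cons hc1 (Walk.cons hc2 Walk.nil) : G.Walk x y) = p := by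
    intro c hc1 hc2
    apply hup
    constructor
    · rw [Walk.isPath_def]
      simp [hc1.ne, hc2.ne, hxy']
    · simp [hxy]
  have h1 := prop a hxa hay
  have h2 := prop b hxb hby
  have := h1.trans h2.symm
  have hs := congrArg Walk.support this
  simpa using hs

theorem stmt_7 {V : Type*} [Fintype V] (G : SimpleGraph V) (hG : IsGeodetic G)
    (hloc : ∀ v : V, (G.induce (G.neighborSet v)).Connected) :
    G = ⊤ := by
  have hconn := hG.1
  -- main step: no pair at distance exactly 2
  have no2 : ∀ x y : V, G.dist x y = 2 → False := by
    intro x y hxy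
    have hxy' : x ≠ y := by
      intro h; subst h; simp [SimpleGraph.dist_self] at hxy
    obtain ⟨p, ⟨hp, hpl⟩, _⟩ := hG.2 x y
    have hl2 : p.length = 2 := by rw [hpl, hxy]
    set w := p.getVert 1 with hw
    have hxw : G.Adj x w := by
      have := p.adj_getVert_succ (i := 0) (by omega)
      simpa using this
    have hwy : G.Adj w y := by
      have := p.adj_getVert_succ (i := 1) (by omega)
      rw [show (1 : ℕ) + 1 = p.length by omega, p.getVert_length] at this
      exact this
    have hxN : x ∈ G.neighborSet w := hxw.symm
    have hyN : y ∈ G.neighborSet w := by simpa [SimpleGraph.mem_neighborSet] using hwy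
    obtain ⟨q⟩ := ((hloc w).preconnected ⟨x, hxN⟩ ⟨y, hyN⟩)
    -- induction along q
    have aux : ∀ (a b : G.neighborSet w) (q : (G.induce (G.neighborSet w)).Walk a b),
        b.val = y → G.dist x a.val ≤ 1 → False := by
      intro a b q
      induction q with
      | nil =>
        intro hb hd
        rw [hb] at hd
        omega
      | @cons a b _ hab q ih =>
        intro hby' hd
        replace ih := ih hby'
        have hab' : G.Adj a.val b.val := hab
        by_cases hb : G.dist x b.val ≤ 1
        · exact ih hb
        · have hdab : G.dist a.val b.val = 1 := (SimpleGraph.dist_eq_one_iff_adj).2 hab'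
          have htri : G.dist x b.val ≤ G.dist x a.val + G.dist a.val b.val :=
            hconn.dist_triangle
          have hxb2 : G.dist x b.val = 2 := by omega
          have hwb : G.Adj w b.val := b.2
          -- a.val is x or a neighbor of x
          rcases Nat.lt_or_ge (G.dist x a.val) 1 with h0 | h1
          · have : x = a.val := (hconn.dist_eq_zero_iff).1 (by omega)
            rw [this] at hxb2
            have : G.dist a.val b.val = 1 := (SimpleGraph.dist_eq_one_iff_adj).2 hab'
            omega
          · have hxa : G.Adj x a.val :=
              (SimpleGraph.dist_eq_one_iff_adj).1 (by omega)
            have heq : a.val = w := by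
              have hxb2' : G.dist x b.val = 2 := hxb2
              have hbx : G.Adj x b.val → False := by
                intro h
                have := (SimpleGraph.dist_eq_one_iff_adj).2 h
                omega
              exact unique_common G hG hxb2' hxa hab' hxw hwb
            have : G.Adj w a.val := a.2
            rw [heq] at this
            exact this.ne rfl
    exact aux ⟨x, hxN⟩ ⟨y, hyN⟩ q rfl (by simp [SimpleGraph.dist_self])
  -- conclude: every pair of distinct vertices is adjacent
  have adj_all : ∀ x y : V, x ≠ y → G.Adj x y := by
    intro x y hne
    by_contra hadj
    -- strong induction on distance
    have main : ∀ n : ℕ, ∀ x y : V, G.dist x y = n → x ≠ y → ¬ G.Adj x y → False := by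
      intro n
      induction n using Nat.strong_induction_on with
      | _ n ih =>
        intro x y hd hne hadj
        have hpos : 0 < G.dist x y := hconn.pos_dist_of_ne hne
        have hne1 : G.dist x y ≠ 1 := by
          intro h; exact hadj ((SimpleGraph.dist_eq_one_iff_adj).1 h)
        have hge2 : 2 ≤ n := by omega
        rcases Nat.eq_or_lt_of_le hge2 with h2 | h3
        · exact no2 x y (by omega)
        · -- find a neighbor of x on a geodesic
          obtain ⟨p, hpl⟩ := hconn.exists_walk_length_eq_dist x y
          cases p with
          | nil => simp at hpl; exact hne rfl
          | cons hxa q =>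
            rename_i a
            simp only [Walk.length_cons] at hpl
            have hqd : G.dist a y = q.length := by
              have h1 : G.dist a y ≤ q.length := SimpleGraph.dist_le q
              have h2 : G.dist x y ≤ 1 + G.dist a y := by
                calc G.dist x y ≤ G.dist x a + G.dist a y := hconn.dist_triangle
                  _ ≤ 1 + G.dist a y := by
                      have := (SimpleGraph.dist_eq_one_iff_adj).2 hxa
                      omega
              omega
            have hay : G.dist a y = n - 1 := by omega
            have hne' : a ≠ y := by
              intro h; subst h; rw [SimpleGraph.dist_self] at hay; omega
            have hadj' : ¬ G.Adj a y := by
              intro h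
              have := (SimpleGraph.dist_eq_one_iff_adj).2 h
              omega
            exact ih (n - 1) (by omega) a y hay hne' hadj'
    exact main (G.dist x y) x y rfl hne hadj
  ext x y
  simp only [top_adj]
  exact ⟨fun h => h.ne, fun h => adj_all x y h⟩
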